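/- Let X₋² = {(x,y,t) ∈ {0,1}² × ℝ₊² × ℝ : (y₁−y₂)² ≤ t and y_i(1−x_i) = 0 for i = 1,2}. Then the closure of the convex hull of X₋² equals the set of (x,y,t) ∈ [0,1]² × ℝ₊² × ℝ₊ such that (y₁−y₂)² ≤ t·x₁ whenever y₁ ≥ y₂, and (y₁−y₂)² ≤ t·x₂ whenever y₂ ≥ y₁. -/

import Mathlib

open Set Filter

private def Xs : Set ((ℝ × ℝ) × (ℝ × ℝ) × ℝ) := {p |
  (p.1.1 = 0 ∨ p.1.1 = 1) ∧ (p.1.2 = 0 ∨ p.1.2 = 1) ∧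
  0 ≤ p.2.1.1 ∧ 0 ≤ p.2.1.2 ∧ (p.2.1.1 - p.2.1.2) ^ 2 ≤ p.2.2 ∧
  p.2.1.1 * (1 - p.1.1) = 0 ∧ p.2.1.2 * (1 - p.1.2) = 0}

private lemma mem_Xs {b1 b2 y1 y2 t : ℝ} (h1 : b1 = 0 ∨ b1 = 1) (h2 : b2 = 0 ∨ b2 = 1)
    (hy1 : 0 ≤ y1) (hy2 : 0 ≤ y2) (ht : (y1 - y2)^2 ≤ t)
    (hc1 : y1 * (1 - b1) = 0) (hc2 : y2 * (1 - b2) = 0) :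
    ((b1, b2), (y1, y2), t) ∈ Xs :=
  ⟨h1, h2, hy1, hy2, ht, hc1, hc2⟩

private lemma combo_mem {A B : (ℝ × ℝ) × (ℝ × ℝ) × ℝ} (hA : A ∈ convexHull ℝ Xs)
    (hB : B ∈ convexHull ℝ Xs) {a b : ℝ} (ha : 0 ≤ a) (hb : 0 ≤ b) (hab : a + b = 1) :
    a • A + b • B ∈ convexHull ℝ Xs :=
  (convex_convexHull ℝ Xs) hA hB ha hb hab

private lemma smul_add_eq (a b : ℝ) (p q : (ℝ × ℝ) × (ℝ × ℝ) × ℝ) :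
    a • p + b • q = ((a*p.1.1 + b*q.1.1, a*p.1.2 + b*q.1.2),
      (a*p.2.1.1 + b*q.2.1.1, a*p.2.1.2 + b*q.2.1.2), a*p.2.2 + b*q.2.2) := rfl

-- y = 0 rectangle
private lemma hull_y0 {x1 x2 t : ℝ} (h0 : 0 ≤ x1) (h1 : x1 ≤ 1) (h2 : 0 ≤ x2) (h3 : x2 ≤ 1)
    (ht : 0 ≤ t) : ((x1, x2), ((0:ℝ), (0:ℝ)), t) ∈ convexHull ℝ Xs := by
  have step : ∀ b : ℝ, (b = 0 ∨ b = 1) → ((x1, b), ((0:ℝ), (0:ℝ)), t) ∈ convexHull ℝ Xs := by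
    intro b hb
    have hA : (((0:ℝ), b), ((0:ℝ), (0:ℝ)), t) ∈ Xs :=
      mem_Xs (Or.inl rfl) hb le_rfl le_rfl (by norm_num; exact ht) (by ring) (by ring)
    have hB : (((1:ℝ), b), ((0:ℝ), (0:ℝ)), t) ∈ Xs :=
      mem_Xs (Or.inr rfl) hb le_rfl le_rfl (by norm_num; exact ht) (by ring) (by ring)
    have h := combo_mem (subset_convexHull ℝ Xs hA) (subset_convexHull ℝ Xs hB)
      (a := 1 - x1) (b := x1) (by linarith) h0 (by ring)
    rw [smul_add_eq] at h
    convert h using 2 <;> simp <;> ring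
  have hA := step 0 (Or.inl rfl)
  have hB := step 1 (Or.inr rfl)
  have h := combo_mem hA hB (a := 1 - x2) (b := x2) (by linarith) h2 (by ring)
  rw [smul_add_eq] at h
  convert h using 2 <;> simp <;> ring

-- diagonal points are in the closure of the hull
private lemma closure_diag {x1 x2 y t : ℝ} (h0 : 0 ≤ x1) (h1 : x1 ≤ 1) (h2 : 0 ≤ x2)
    (h3 : x2 ≤ 1) (hy : 0 ≤ y) (ht : 0 ≤ t) :
    ((x1, x2), (y, y), t) ∈ closure (convexHull ℝ Xs) := by
  set g : ℝ → (ℝ × ℝ) × (ℝ × ℝ) × ℝ :=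
    fun e => ((e*(1-x1) + x1, e*(1-x2) + x2), (y, y), t) with hg
  have hcont : Continuous g := by fun_prop
  have hmem : ∀ n : ℕ, g (1/((n:ℝ)+1)) ∈ convexHull ℝ Xs := by
    intro n
    set e : ℝ := 1/((n:ℝ)+1) with he
    have he0 : 0 < e := by positivity
    have he1 : e ≤ 1 := by
      rw [he, div_le_one (by positivity)]; norm_num
    have hA : (((1:ℝ), (1:ℝ)), (y/e, y/e), t) ∈ Xs :=
      mem_Xs (Or.inr rfl) (Or.inr rfl) (by positivity) (by positivity)
        (by norm_num; exact ht) (by ring) (by ring)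
    have hB := hull_y0 (t := t) h0 h1 h2 h3 ht
    have hne : e ≠ 0 := ne_of_gt he0
    have h := combo_mem (subset_convexHull ℝ Xs hA) hB (a := e) (b := 1 - e) he0.le
      (by linarith) (by ring)
    have heq : g e = e • (((1:ℝ),(1:ℝ)), (y/e, y/e), t)
        + (1 - e) • ((x1, x2), ((0:ℝ),(0:ℝ)), t) := by
      simp only [hg, Prod.smul_mk, Prod.mk_add_mk, smul_eq_mul, Prod.mk.injEq]
      exact ⟨⟨by ring, by ring⟩, ⟨by field_simp; ring, by field_simp; ring⟩, by ring⟩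
    rw [heq]
    exact h
  have htend : Filter.Tendsto (fun n : ℕ => g (1/((n:ℝ)+1))) atTop (nhds (g 0)) :=
    (hcont.tendsto 0).comp tendsto_one_div_add_atTop_nhds_zero_nat
  have hg0 : g 0 = ((x1, x2), (y, y), t) := by simp [hg]
  rw [hg0] at htend
  exact mem_closure_of_tendsto htend (Filter.Eventually.of_forall hmem)

private lemma hull_edge1 {x1 x2 y1 t : ℝ} (h0 : 0 ≤ x1) (h1 : x1 ≤ 1) (h2 : 0 ≤ x2)
    (h3 : x2 ≤ 1) (hy : 0 ≤ y1) (ht : 0 ≤ t) (hq : y1^2 ≤ t * x1) :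
    ((x1, x2), (y1, (0:ℝ)), t) ∈ convexHull ℝ Xs := by
  have step : ∀ b : ℝ, (b = 0 ∨ b = 1) → ((x1, b), (y1, (0:ℝ)), t) ∈ convexHull ℝ Xs := by
    intro b hb
    rcases eq_or_lt_of_le h0 with h00 | hpos
    · -- x1 = 0 forces y1 = 0
      have hy10 : y1 = 0 := by nlinarith
      subst hy10
      rw [← h00]
      exact subset_convexHull ℝ Xs
        (mem_Xs (Or.inl rfl) hb le_rfl le_rfl (by norm_num; exact ht) (by ring) (by ring))
    · rcases eq_or_lt_of_le h1 with h11 | hlt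
      · -- x1 = 1 : the point is itself in Xs
        subst h11
        exact subset_convexHull ℝ Xs
          (mem_Xs (Or.inr rfl) hb hy le_rfl (by nlinarith) (by ring) (by ring))
      · -- 0 < x1 < 1
        set s : ℝ := (t - y1^2/x1) / (1 - x1) with hs
        have hx1ne : x1 ≠ 0 := ne_of_gt hpos
        have hts : 0 ≤ t - y1^2/x1 := by
          rw [sub_nonneg, div_le_iff₀ hpos]; nlinarith
        have hs0 : 0 ≤ s := div_nonneg hts (by linarith)
        have hA : (((1:ℝ), b), (y1/x1, (0:ℝ)), y1^2/x1^2) ∈ Xs :=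
          mem_Xs (Or.inr rfl) hb (by positivity) le_rfl
            (by rw [sub_zero, div_pow]) (by ring) (by ring)
        have hB : (((0:ℝ), b), ((0:ℝ), (0:ℝ)), s) ∈ Xs :=
          mem_Xs (Or.inl rfl) hb le_rfl le_rfl (by norm_num; exact hs0) (by ring) (by ring)
        have h := combo_mem (subset_convexHull ℝ Xs hA) (subset_convexHull ℝ Xs hB)
          (a := x1) (b := 1 - x1) h0 (by linarith) (by ring)
        have heq : ((x1, b), (y1, (0:ℝ)), t)
            = x1 • (((1:ℝ), b), (y1/x1, (0:ℝ)), y1^2/x1^2)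
              + (1 - x1) • (((0:ℝ), b), ((0:ℝ), (0:ℝ)), s) := by
          simp only [Prod.smul_mk, Prod.mk_add_mk, smul_eq_mul, Prod.mk.injEq]
          refine ⟨⟨by ring, by ring⟩, ⟨by field_simp; ring, by ring⟩, ?_⟩
          have h1x : (1:ℝ) - x1 ≠ 0 := ne_of_gt (by linarith)
          rw [hs]
          field_simp
          ring
        rw [heq]
        exact h
  have hA := step 0 (Or.inl rfl)
  have hB := step 1 (Or.inr rfl)
  have h := combo_mem hA hB (a := 1 - x2) (b := x2) (by linarith) h2 (by ring)
  have heq : ((x1, x2), (y1, (0:ℝ)), t)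
      = (1 - x2) • ((x1, (0:ℝ)), (y1, (0:ℝ)), t) + x2 • ((x1, (1:ℝ)), (y1, (0:ℝ)), t) := by
    simp only [Prod.smul_mk, Prod.mk_add_mk, smul_eq_mul, Prod.mk.injEq]
    exact ⟨⟨by ring, by ring⟩, ⟨by ring, by ring⟩, by ring⟩
  rw [heq]
  exact h

private lemma hull_edge2 {x1 x2 y2 t : ℝ} (h0 : 0 ≤ x1) (h1 : x1 ≤ 1) (h2 : 0 ≤ x2)
    (h3 : x2 ≤ 1) (hy : 0 ≤ y2) (ht : 0 ≤ t) (hq : y2^2 ≤ t * x2) :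
    ((x1, x2), ((0:ℝ), y2), t) ∈ convexHull ℝ Xs := by
  have step : ∀ b : ℝ, (b = 0 ∨ b = 1) → ((b, x2), ((0:ℝ), y2), t) ∈ convexHull ℝ Xs := by
    intro b hb
    rcases eq_or_lt_of_le h2 with h00 | hpos
    · have hy20 : y2 = 0 := by nlinarith
      subst hy20
      rw [← h00]
      exact subset_convexHull ℝ Xs
        (mem_Xs hb (Or.inl rfl) le_rfl le_rfl (by norm_num; exact ht) (by ring) (by ring))
    · rcases eq_or_lt_of_le h3 with h11 | hlt
      · subst h11
        exact subset_convexHull ℝ Xs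
          (mem_Xs hb (Or.inr rfl) le_rfl hy (by nlinarith) (by ring) (by ring))
      · set s : ℝ := (t - y2^2/x2) / (1 - x2) with hs
        have hx2ne : x2 ≠ 0 := ne_of_gt hpos
        have hts : 0 ≤ t - y2^2/x2 := by
          rw [sub_nonneg, div_le_iff₀ hpos]; nlinarith
        have hs0 : 0 ≤ s := div_nonneg hts (by linarith)
        have hA : ((b, (1:ℝ)), ((0:ℝ), y2/x2), y2^2/x2^2) ∈ Xs :=
          mem_Xs hb (Or.inr rfl) le_rfl (by positivity)
            (by rw [zero_sub, neg_pow, div_pow]; norm_num) (by ring) (by ring)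
        have hB : ((b, (0:ℝ)), ((0:ℝ), (0:ℝ)), s) ∈ Xs :=
          mem_Xs hb (Or.inl rfl) le_rfl le_rfl (by norm_num; exact hs0) (by ring) (by ring)
        have h := combo_mem (subset_convexHull ℝ Xs hA) (subset_convexHull ℝ Xs hB)
          (a := x2) (b := 1 - x2) h2 (by linarith) (by ring)
        have heq : ((b, x2), ((0:ℝ), y2), t)
            = x2 • ((b, (1:ℝ)), ((0:ℝ), y2/x2), y2^2/x2^2)
              + (1 - x2) • ((b, (0:ℝ)), ((0:ℝ), (0:ℝ)), s) := by
          simp only [Prod.smul_mk, Prod.mk_add_mk, smul_eq_mul, Prod.mk.injEq]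
          refine ⟨⟨by ring, by ring⟩, ⟨by ring, by field_simp; ring⟩, ?_⟩
          have h1x : (1:ℝ) - x2 ≠ 0 := ne_of_gt (by linarith)
          rw [hs]
          field_simp
          ring
        rw [heq]
        exact h
  have hA := step 0 (Or.inl rfl)
  have hB := step 1 (Or.inr rfl)
  have h := combo_mem hA hB (a := 1 - x1) (b := x1) (by linarith) h0 (by ring)
  have heq : ((x1, x2), ((0:ℝ), y2), t)
      = (1 - x1) • (((0:ℝ), x2), ((0:ℝ), y2), t) + x1 • (((1:ℝ), x2), ((0:ℝ), y2), t) := by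
    simp only [Prod.smul_mk, Prod.mk_add_mk, smul_eq_mul, Prod.mk.injEq]
    exact ⟨⟨by ring, by ring⟩, ⟨by ring, by ring⟩, by ring⟩
  rw [heq]
  exact h

private lemma main1 {x1 x2 y1 y2 t : ℝ} (h0 : 0 ≤ x1) (h1 : x1 ≤ 1) (h2 : 0 ≤ x2)
    (h3 : x2 ≤ 1) (hy1 : 0 ≤ y1) (hy2 : 0 ≤ y2) (ht : 0 ≤ t) (hle : y2 ≤ y1)
    (hq : (y1 - y2)^2 ≤ t * x1) :
    ((x1, x2), (y1, y2), t) ∈ closure (convexHull ℝ Xs) := by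
  set d : ℝ := y1 - y2 with hd
  have hd0 : 0 ≤ d := by simp [hd]; linarith
  have hqmem : ((x1, x2), (d, (0:ℝ)), t) ∈ convexHull ℝ Xs :=
    hull_edge1 h0 h1 h2 h3 hd0 ht (by rw [hd]; exact hq)
  set g : ℝ → (ℝ × ℝ) × (ℝ × ℝ) × ℝ :=
    fun e => ((x1, x2), ((1-e)*d + y2, y2), t) with hg
  have hcont : Continuous g := by fun_prop
  have hmem : ∀ n : ℕ, g (1/((n:ℝ)+1)) ∈ closure (convexHull ℝ Xs) := by
    intro n
    set e : ℝ := 1/((n:ℝ)+1) with he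
    have he0 : 0 < e := by positivity
    have he1 : e ≤ 1 := by rw [he, div_le_one (by positivity)]; norm_num
    have hne : e ≠ 0 := ne_of_gt he0
    have hr : ((x1, x2), (y2/e, y2/e), t) ∈ closure (convexHull ℝ Xs) :=
      closure_diag h0 h1 h2 h3 (by positivity) ht
    have h := (convex_convexHull ℝ Xs).closure (subset_closure hqmem) hr
      (a := 1 - e) (b := e) (by linarith) he0.le (by ring)
    have heq : g e = (1 - e) • ((x1, x2), (d, (0:ℝ)), t)
        + e • ((x1, x2), (y2/e, y2/e), t) := by
      simp only [hg, Prod.smul_mk, Prod.mk_add_mk, smul_eq_mul, Prod.mk.injEq]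
      exact ⟨⟨by ring, by ring⟩, ⟨by field_simp, by field_simp; ring⟩, by ring⟩
    rw [heq]
    exact h
  have htend : Filter.Tendsto (fun n : ℕ => g (1/((n:ℝ)+1))) atTop (nhds (g 0)) :=
    (hcont.tendsto 0).comp tendsto_one_div_add_atTop_nhds_zero_nat
  have hg0 : g 0 = ((x1, x2), (y1, y2), t) := by
    have hyy : d + y2 = y1 := by rw [hd]; ring
    simp [hg, hyy]
  rw [hg0] at htend
  exact isClosed_closure.mem_of_tendsto htend (Filter.Eventually.of_forall hmem)

private lemma main2 {x1 x2 y1 y2 t : ℝ} (h0 : 0 ≤ x1) (h1 : x1 ≤ 1) (h2 : 0 ≤ x2)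
    (h3 : x2 ≤ 1) (hy1 : 0 ≤ y1) (hy2 : 0 ≤ y2) (ht : 0 ≤ t) (hle : y1 ≤ y2)
    (hq : (y1 - y2)^2 ≤ t * x2) :
    ((x1, x2), (y1, y2), t) ∈ closure (convexHull ℝ Xs) := by
  set d : ℝ := y2 - y1 with hd
  have hd0 : 0 ≤ d := by simp [hd]; linarith
  have hqmem : ((x1, x2), ((0:ℝ), d), t) ∈ convexHull ℝ Xs :=
    hull_edge2 h0 h1 h2 h3 hd0 ht (by rw [hd]; nlinarith)
  set g : ℝ → (ℝ × ℝ) × (ℝ × ℝ) × ℝ :=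
    fun e => ((x1, x2), (y1, (1-e)*d + y1), t) with hg
  have hcont : Continuous g := by fun_prop
  have hmem : ∀ n : ℕ, g (1/((n:ℝ)+1)) ∈ closure (convexHull ℝ Xs) := by
    intro n
    set e : ℝ := 1/((n:ℝ)+1) with he
    have he0 : 0 < e := by positivity
    have he1 : e ≤ 1 := by rw [he, div_le_one (by positivity)]; norm_num
    have hne : e ≠ 0 := ne_of_gt he0
    have hr : ((x1, x2), (y1/e, y1/e), t) ∈ closure (convexHull ℝ Xs) :=
      closure_diag h0 h1 h2 h3 (by positivity) ht
    have h := (convex_convexHull ℝ Xs).closure (subset_closure hqmem) hr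
      (a := 1 - e) (b := e) (by linarith) he0.le (by ring)
    have heq : g e = (1 - e) • ((x1, x2), ((0:ℝ), d), t)
        + e • ((x1, x2), (y1/e, y1/e), t) := by
      simp only [hg, Prod.smul_mk, Prod.mk_add_mk, smul_eq_mul, Prod.mk.injEq]
      exact ⟨⟨by ring, by ring⟩, ⟨by field_simp; ring, by field_simp⟩, by ring⟩
    rw [heq]
    exact h
  have htend : Filter.Tendsto (fun n : ℕ => g (1/((n:ℝ)+1))) atTop (nhds (g 0)) :=
    (hcont.tendsto 0).comp tendsto_one_div_add_atTop_nhds_zero_nat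
  have hg0 : g 0 = ((x1, x2), (y1, y2), t) := by
    have hyy : d + y1 = y2 := by rw [hd]; ring
    simp [hg, hyy]
  rw [hg0] at htend
  exact isClosed_closure.mem_of_tendsto htend (Filter.Eventually.of_forall hmem)

private def Ss : Set ((ℝ × ℝ) × (ℝ × ℝ) × ℝ) := {p |
  0 ≤ p.1.1 ∧ p.1.1 ≤ 1 ∧ 0 ≤ p.1.2 ∧ p.1.2 ≤ 1 ∧
  0 ≤ p.2.1.1 ∧ 0 ≤ p.2.1.2 ∧ 0 ≤ p.2.2 ∧
  (p.2.1.2 ≤ p.2.1.1 → (p.2.1.1 - p.2.1.2) ^ 2 ≤ p.2.2 * p.1.1) ∧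
  (p.2.1.1 ≤ p.2.1.2 → (p.2.1.1 - p.2.1.2) ^ 2 ≤ p.2.2 * p.1.2)}

private lemma X_sub_S : Xs ⊆ Ss := by
  rintro ⟨⟨x1, x2⟩, ⟨y1, y2⟩, t⟩ ⟨hx1, hx2, hy1, hy2, hq, hc1, hc2⟩
  simp only [Xs, Set.mem_setOf_eq] at *
  have ht : 0 ≤ t := le_trans (sq_nonneg _) hq
  refine ⟨?_, ?_, ?_, ?_, hy1, hy2, ht, ?_, ?_⟩
  · rcases hx1 with h | h <;> rw [h] <;> norm_num
  · rcases hx1 with h | h <;> rw [h] <;> norm_num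
  · rcases hx2 with h | h <;> rw [h] <;> norm_num
  · rcases hx2 with h | h <;> rw [h] <;> norm_num
  · intro hle
    rcases hx1 with h | h
    · subst h
      have h1 : y1 = 0 := by simpa using hc1
      have h2 : y2 = 0 := le_antisymm (h1 ▸ hle) hy2
      rw [h1, h2]; norm_num
    · subst h; rw [mul_one]; exact hq
  · intro hle
    rcases hx2 with h | h
    · subst h
      have h1 : y2 = 0 := by simpa using hc2
      have h2 : y1 = 0 := le_antisymm (h1 ▸ hle) hy1
      rw [h1, h2]; norm_num
    · subst h; rw [mul_one]; exact hq

private lemma key_ineq {up uq tp tq xp xq a b : ℝ} (hup : 0 ≤ up) (huq : 0 ≤ uq)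
    (h1 : up^2 ≤ tp*xp) (h2 : uq^2 ≤ tq*xq) (htp : 0 ≤ tp) (htq : 0 ≤ tq)
    (hxp : 0 ≤ xp) (hxq : 0 ≤ xq) (ha : 0 ≤ a) (hb : 0 ≤ b) :
    (a*up + b*uq)^2 ≤ (a*tp + b*tq) * (a*xp + b*xq) := by
  have h3 : (up*uq)^2 ≤ (tp*xp)*(tq*xq) := by nlinarith
  have h4 : (2*(up*uq))^2 ≤ (tp*xq + tq*xp)^2 := by nlinarith [sq_nonneg (tp*xq - tq*xp)]
  have h5 : 0 ≤ 2*(up*uq) := by positivity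
  have h6 : 0 ≤ tp*xq + tq*xp := by positivity
  have key : 2*(up*uq) ≤ tp*xq + tq*xp :=
    (pow_le_pow_iff_left₀ h5 h6 two_ne_zero).mp h4
  nlinarith [mul_nonneg (mul_nonneg ha hb) h6, sq_nonneg a, sq_nonneg b, mul_nonneg ha hb]

set_option maxHeartbeats 1000000 in
private lemma S_convex : Convex ℝ Ss := by
  rintro ⟨⟨px1, px2⟩, ⟨py1, py2⟩, pt⟩ hp ⟨⟨qx1, qx2⟩, ⟨qy1, qy2⟩, qt⟩ hq a b ha hb hab
  obtain ⟨hp0, hp1, hp2, hp3, hp4, hp5, hp6, hp7, hp8⟩ := hp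
  obtain ⟨hq0, hq1, hq2, hq3, hq4, hq5, hq6, hq7, hq8⟩ := hq
  simp only [Ss, Set.mem_setOf_eq, Prod.smul_mk, Prod.mk_add_mk, smul_eq_mul] at *
  have hup1 : (max (py1 - py2) 0)^2 ≤ pt * px1 := by
    rcases le_total py2 py1 with h | h
    · rw [max_eq_left (by linarith)]; exact hp7 h
    · rw [max_eq_right (by linarith)]; simpa using mul_nonneg hp6 hp0
  have hup2 : (max (py2 - py1) 0)^2 ≤ pt * px2 := by
    rcases le_total py1 py2 with h | h
    · rw [max_eq_left (by linarith)]
      have := hp8 h; nlinarith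
    · rw [max_eq_right (by linarith)]; simpa using mul_nonneg hp6 hp2
  have huq1 : (max (qy1 - qy2) 0)^2 ≤ qt * qx1 := by
    rcases le_total qy2 qy1 with h | h
    · rw [max_eq_left (by linarith)]; exact hq7 h
    · rw [max_eq_right (by linarith)]; simpa using mul_nonneg hq6 hq0
  have huq2 : (max (qy2 - qy1) 0)^2 ≤ qt * qx2 := by
    rcases le_total qy1 qy2 with h | h
    · rw [max_eq_left (by linarith)]
      have := hq8 h; nlinarith
    · rw [max_eq_right (by linarith)]; simpa using mul_nonneg hq6 hq2
  refine ⟨by nlinarith, by nlinarith, by nlinarith, by nlinarith,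
    by nlinarith, by nlinarith, by nlinarith, ?_, ?_⟩
  · intro hle
    have key := key_ineq (le_max_right (py1 - py2) 0) (le_max_right (qy1 - qy2) 0)
      hup1 huq1 hp6 hq6 hp0 hq0 ha hb
    have hd1 : a * py1 + b * qy1 - (a * py2 + b * qy2)
        = a * (py1 - py2) + b * (qy1 - qy2) := by ring
    have hd2 : a * (py1 - py2) + b * (qy1 - qy2)
        ≤ a * max (py1 - py2) 0 + b * max (qy1 - qy2) 0 := by
      gcongr <;> exact le_max_left _ _
    have hd3 : 0 ≤ a * (py1 - py2) + b * (qy1 - qy2) := by linarith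
    calc (a * py1 + b * qy1 - (a * py2 + b * qy2))^2
        = (a * (py1 - py2) + b * (qy1 - qy2))^2 := by rw [hd1]
      _ ≤ (a * max (py1 - py2) 0 + b * max (qy1 - qy2) 0)^2 := by
          apply pow_le_pow_left₀ hd3 hd2
      _ ≤ (a * pt + b * qt) * (a * px1 + b * qx1) := key
  · intro hle
    have key := key_ineq (le_max_right (py2 - py1) 0) (le_max_right (qy2 - qy1) 0)
      hup2 huq2 hp6 hq6 hp2 hq2 ha hb
    have hd2 : a * (py2 - py1) + b * (qy2 - qy1)
        ≤ a * max (py2 - py1) 0 + b * max (qy2 - qy1) 0 := by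
      gcongr <;> exact le_max_left _ _
    have hd3 : 0 ≤ a * (py2 - py1) + b * (qy2 - qy1) := by linarith
    calc (a * py1 + b * qy1 - (a * py2 + b * qy2))^2
        = (a * (py2 - py1) + b * (qy2 - qy1))^2 := by ring
      _ ≤ (a * max (py2 - py1) 0 + b * max (qy2 - qy1) 0)^2 := by
          apply pow_le_pow_left₀ hd3 hd2
      _ ≤ (a * pt + b * qt) * (a * px2 + b * qx2) := key

private lemma S_closed : IsClosed Ss := by
  have hS : Ss = {p : (ℝ × ℝ) × (ℝ × ℝ) × ℝ |
      0 ≤ p.1.1 ∧ p.1.1 ≤ 1 ∧ 0 ≤ p.1.2 ∧ p.1.2 ≤ 1 ∧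
      0 ≤ p.2.1.1 ∧ 0 ≤ p.2.1.2 ∧ 0 ≤ p.2.2 ∧
      (max (p.2.1.1 - p.2.1.2) 0) ^ 2 ≤ p.2.2 * p.1.1 ∧
      (max (p.2.1.2 - p.2.1.1) 0) ^ 2 ≤ p.2.2 * p.1.2} := by
    ext ⟨⟨x1, x2⟩, ⟨y1, y2⟩, t⟩
    simp only [Ss, Set.mem_setOf_eq]
    constructor
    · rintro ⟨h0, h1, h2, h3, h4, h5, h6, h7, h8⟩
      refine ⟨h0, h1, h2, h3, h4, h5, h6, ?_, ?_⟩
      · rcases le_total y2 y1 with h | h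
        · rw [max_eq_left (by linarith)]; exact h7 h
        · rw [max_eq_right (by linarith)]; simpa using mul_nonneg h6 h0
      · rcases le_total y1 y2 with h | h
        · rw [max_eq_left (by linarith)]
          have := h8 h; nlinarith
        · rw [max_eq_right (by linarith)]; simpa using mul_nonneg h6 h2
    · rintro ⟨h0, h1, h2, h3, h4, h5, h6, h7, h8⟩
      refine ⟨h0, h1, h2, h3, h4, h5, h6, ?_, ?_⟩
      · intro hle
        rw [max_eq_left (by linarith)] at h7; exact h7
      · intro hle
        rw [max_eq_left (by linarith)] at h8; nlinarith
  rw [hS]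
  simp only [Set.setOf_and]
  repeat' apply IsClosed.inter
  all_goals first
    | exact isClosed_le (by fun_prop) (by fun_prop)
    | exact isClosed_le (by fun_prop) (by fun_prop)

/-- two-variable rank-one case with a negative off-diagonal.
The closed convex hull of
`X₋² = {(x,y,t) ∈ {0,1}² × ℝ₊² × ℝ : (y₁−y₂)² ≤ t, y_i(1−x_i) = 0}` equals the set of
`(x,y,t) ∈ [0,1]² × ℝ₊² × ℝ₊` with `(y₁−y₂)² ≤ t·x₁` whenever `y₁ ≥ y₂` and
`(y₁−y₂)² ≤ t·x₂` whenever `y₂ ≥ y₁`. -/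
theorem stmt_7 :
    closure (convexHull ℝ {p : (ℝ × ℝ) × (ℝ × ℝ) × ℝ |
        (p.1.1 = 0 ∨ p.1.1 = 1) ∧ (p.1.2 = 0 ∨ p.1.2 = 1) ∧
        0 ≤ p.2.1.1 ∧ 0 ≤ p.2.1.2 ∧ (p.2.1.1 - p.2.1.2) ^ 2 ≤ p.2.2 ∧
        p.2.1.1 * (1 - p.1.1) = 0 ∧ p.2.1.2 * (1 - p.1.2) = 0})
      = {p : (ℝ × ℝ) × (ℝ × ℝ) × ℝ |
          0 ≤ p.1.1 ∧ p.1.1 ≤ 1 ∧ 0 ≤ p.1.2 ∧ p.1.2 ≤ 1 ∧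
          0 ≤ p.2.1.1 ∧ 0 ≤ p.2.1.2 ∧ 0 ≤ p.2.2 ∧
          (p.2.1.2 ≤ p.2.1.1 → (p.2.1.1 - p.2.1.2) ^ 2 ≤ p.2.2 * p.1.1) ∧
          (p.2.1.1 ≤ p.2.1.2 → (p.2.1.1 - p.2.1.2) ^ 2 ≤ p.2.2 * p.1.2)} := by
  show closure (convexHull ℝ Xs) = Ss
  apply Set.Subset.antisymm
  · exact closure_minimal (convexHull_min X_sub_S S_convex) S_closed
  · rintro ⟨⟨x1, x2⟩, ⟨y1, y2⟩, t⟩ ⟨h0, h1, h2, h3, hy1, hy2, ht, hq1, hq2⟩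
    rcases le_total y2 y1 with h | h
    · exact main1 h0 h1 h2 h3 hy1 hy2 ht h (hq1 h)
    · exact main2 h0 h1 h2 h3 hy1 hy2 ht h (hq2 h)
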